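/- Let d, m ≥ 1. Let N : Fin m → Matrix (Fin d) (Fin d) ℂ be a trace-preserving Kraus family (i.e. Σ_i N_iᴴ N_i = I), and let M₀, M₁ be d×d complex matrices forming a binary quantum measurement (i.e. M₀ᴴM₀ + M₁ᴴM₁ = I). Define the map ℰ on d×d complex matrices by ℰ(ρ) = Σ_i N_i (M₁ ρ M₁ᴴ) N_iᴴ. Then for every positive semidefinite d×d complex matrix ρ, the series of nonnegative real numbers Σ_{k=0}^∞ tr(ℰ^k(ρ)) converges (i.e. the family k ↦ tr(ℰ^k(ρ)) is summable) if and only if Σ_{k=0}^∞ tr(M₀ ℰ^k(ρ) M₀ᴴ) = tr(ρ). -/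

import Mathlib

open Matrix
open scoped ComplexOrder

/-- The super-operator `ℰ(ρ) = Σ_i N_i (M₁ ρ M₁ᴴ) N_iᴴ` of one loop iteration. -/
noncomputable def loopStep {d m : ℕ} (N : Fin m → Matrix (Fin d) (Fin d) ℂ)
    (M₁ : Matrix (Fin d) (Fin d) ℂ) (σ : Matrix (Fin d) (Fin d) ℂ) :
    Matrix (Fin d) (Fin d) ℂ :=
  ∑ i, N i * (M₁ * σ * M₁ᴴ) * (N i)ᴴ

namespace AstAux

variable {d : ℕ}

lemma psd_sum {ι : Type*} (s : Finset ι) (f : ι → Matrix (Fin d) (Fin d) ℂ)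
    (hf : ∀ i ∈ s, (f i).PosSemidef) : (∑ i ∈ s, f i).PosSemidef := by
  classical
  induction s using Finset.cons_induction with
  | empty => simpa using Matrix.PosSemidef.zero
  | cons a s ha ih =>
      rw [Finset.sum_cons]
      exact ((hf a (Finset.mem_cons_self a s)).add
        (ih fun i hi => hf i (Finset.mem_cons_of_mem hi)))

lemma sum_mulVec {ι : Type*} (s : Finset ι) (f : ι → Matrix (Fin d) (Fin d) ℂ)
    (x : Fin d → ℂ) : (∑ j ∈ s, f j) *ᵥ x = ∑ j ∈ s, f j *ᵥ x := by
  classical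
  induction s using Finset.cons_induction with
  | empty => simp
  | cons a s ha ih => rw [Finset.sum_cons, Finset.sum_cons, Matrix.add_mulVec, ih]

lemma psd_trace_re_nonneg {A : Matrix (Fin d) (Fin d) ℂ} (hA : A.PosSemidef) :
    0 ≤ A.trace.re := by
  have h : 0 ≤ A.trace := by
    rw [Matrix.trace]
    refine Finset.sum_nonneg fun i _ => ?_
    have h2 := hA.dotProduct_mulVec_nonneg (Pi.single i 1)
    have hs : star (Pi.single i 1 : Fin d → ℂ) = Pi.single i 1 := by
      ext j; by_cases hj : j = i <;> simp [hj, Pi.single_apply]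
    rw [hs, single_dotProduct, one_mul, Matrix.mulVec_single] at h2
    simpa [Matrix.diag] using h2
  exact (RCLike.nonneg_iff.mp h).1

lemma psd_trace_im_zero {A : Matrix (Fin d) (Fin d) ℂ} (hA : A.PosSemidef) :
    A.trace.im = 0 := by
  have h : 0 ≤ A.trace := by
    rw [Matrix.trace]
    refine Finset.sum_nonneg fun i _ => ?_
    have h2 := hA.dotProduct_mulVec_nonneg (Pi.single i 1)
    have hs : star (Pi.single i 1 : Fin d → ℂ) = Pi.single i 1 := by
      ext j; by_cases hj : j = i <;> simp [hj, Pi.single_apply]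
    rw [hs, single_dotProduct, one_mul, Matrix.mulVec_single] at h2
    simpa [Matrix.diag] using h2
  exact (RCLike.nonneg_iff.mp h).2

lemma loe_trans {A B C : Matrix (Fin d) (Fin d) ℂ} (h1 : (B - A).PosSemidef)
    (h2 : (C - B).PosSemidef) : (C - A).PosSemidef := by
  have := h2.add h1
  rwa [sub_add_sub_cancel] at this

lemma trace_re_mono {A B : Matrix (Fin d) (Fin d) ℂ} (h : (B - A).PosSemidef) :
    A.trace.re ≤ B.trace.re := by
  have := psd_trace_re_nonneg h
  rw [Matrix.trace_sub, Complex.sub_re] at this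
  linarith

lemma psd_smul {A : Matrix (Fin d) (Fin d) ℂ} (hA : A.PosSemidef) {c : ℝ} (hc : 0 ≤ c) :
    ((c : ℂ) • A).PosSemidef := by
  refine Matrix.PosSemidef.of_dotProduct_mulVec_nonneg ?_ fun x => ?_
  · unfold Matrix.IsHermitian
    rw [Matrix.conjTranspose_smul, hA.1.eq]
    congr 1
    simp
  · rw [Matrix.smul_mulVec, dotProduct_smul]
    exact mul_nonneg (by exact_mod_cast Complex.zero_le_real.mpr hc) (hA.dotProduct_mulVec_nonneg x)

variable {d m : ℕ} (N : Fin m → Matrix (Fin d) (Fin d) ℂ) (M₁ : Matrix (Fin d) (Fin d) ℂ)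

lemma loopStep_add (A B : Matrix (Fin d) (Fin d) ℂ) :
    loopStep N M₁ (A + B) = loopStep N M₁ A + loopStep N M₁ B := by
  simp only [loopStep, Matrix.mul_add, Matrix.add_mul, Finset.sum_add_distrib]

lemma loopStep_smul (c : ℂ) (A : Matrix (Fin d) (Fin d) ℂ) :
    loopStep N M₁ (c • A) = c • loopStep N M₁ A := by
  simp only [loopStep, Matrix.mul_smul, Matrix.smul_mul, Finset.smul_sum]

/-- `loopStep` as a linear map. -/
noncomputable def loopStepL : Matrix (Fin d) (Fin d) ℂ →ₗ[ℂ] Matrix (Fin d) (Fin d) ℂ where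
  toFun := loopStep N M₁
  map_add' := loopStep_add N M₁
  map_smul' := loopStep_smul N M₁

lemma iterate_eq_pow (k : ℕ) (A : Matrix (Fin d) (Fin d) ℂ) :
    (loopStep N M₁)^[k] A = ((loopStepL N M₁) ^ k) A := by
  induction k with
  | zero => simp
  | succ k ih =>
      rw [Function.iterate_succ_apply', ih, pow_succ', Module.End.mul_apply]
      rfl

lemma loopStep_psd {A : Matrix (Fin d) (Fin d) ℂ} (hA : A.PosSemidef) :
    (loopStep N M₁ A).PosSemidef := by
  refine psd_sum _ _ fun i _ => ?_
  exact (hA.mul_mul_conjTranspose_same M₁).mul_mul_conjTranspose_same (N i)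

lemma iterate_psd {A : Matrix (Fin d) (Fin d) ℂ} (hA : A.PosSemidef) (k : ℕ) :
    ((loopStep N M₁)^[k] A).PosSemidef := by
  induction k with
  | zero => simpa using hA
  | succ k ih => rw [Function.iterate_succ_apply']; exact loopStep_psd N M₁ ih

lemma loopStep_mono {A B : Matrix (Fin d) (Fin d) ℂ} (h : (B - A).PosSemidef) :
    (loopStep N M₁ B - loopStep N M₁ A).PosSemidef := by
  have : loopStep N M₁ B - loopStep N M₁ A = loopStep N M₁ (B - A) :=
    (map_sub (loopStepL N M₁) B A).symm
  rw [this]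
  exact loopStep_psd N M₁ h

lemma iterate_mono {A B : Matrix (Fin d) (Fin d) ℂ} (h : (B - A).PosSemidef) (k : ℕ) :
    ((loopStep N M₁)^[k] B - (loopStep N M₁)^[k] A).PosSemidef := by
  induction k with
  | zero => simpa using h
  | succ k ih =>
      rw [Function.iterate_succ_apply', Function.iterate_succ_apply']
      exact loopStep_mono N M₁ ih

lemma iterate_smul_real (c : ℝ) (A : Matrix (Fin d) (Fin d) ℂ) (k : ℕ) :
    (loopStep N M₁)^[k] ((c : ℂ) • A) = (c : ℂ) • (loopStep N M₁)^[k] A := by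
  rw [iterate_eq_pow, iterate_eq_pow, _root_.map_smul]

lemma iterate_sum {ι : Type*} (s : Finset ι) (f : ι → Matrix (Fin d) (Fin d) ℂ) (k : ℕ) :
    (loopStep N M₁)^[k] (∑ j ∈ s, f j) = ∑ j ∈ s, (loopStep N M₁)^[k] (f j) := by
  simp only [iterate_eq_pow]
  exact map_sum _ _ _

lemma trace_loopStep (hN : ∑ i, (N i)ᴴ * N i = 1) (A : Matrix (Fin d) (Fin d) ℂ) :
    (loopStep N M₁ A).trace = (M₁ * A * M₁ᴴ).trace := by
  unfold loopStep
  rw [Matrix.trace_sum]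
  have h1 : ∀ i, (N i * (M₁ * A * M₁ᴴ) * (N i)ᴴ).trace = ((N i)ᴴ * N i * (M₁ * A * M₁ᴴ)).trace :=
    fun i => Matrix.trace_mul_cycle (N i) (M₁ * A * M₁ᴴ) ((N i)ᴴ)
  simp_rw [h1, ← Matrix.trace_sum, ← Finset.sum_mul, hN, one_mul]

lemma trace_split (M₀ : Matrix (Fin d) (Fin d) ℂ) (hM : M₀ᴴ * M₀ + M₁ᴴ * M₁ = 1)
    (A : Matrix (Fin d) (Fin d) ℂ) :
    (M₀ * A * M₀ᴴ).trace + (M₁ * A * M₁ᴴ).trace = A.trace := by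
  rw [Matrix.trace_mul_cycle M₀ A M₀ᴴ, Matrix.trace_mul_cycle M₁ A M₁ᴴ,
    ← Matrix.trace_add, ← Matrix.add_mul, hM, one_mul]


lemma eq_re_of_nonneg {z : ℂ} (h : 0 ≤ z) : z = ((z.re : ℝ) : ℂ) := by
  have h2 : z.im = 0 := by simpa using (RCLike.nonneg_iff.mp h).2
  apply Complex.ext <;> simp [h2]

lemma psd_neg_eq_zero {A : Matrix (Fin d) (Fin d) ℂ} (hA : A.PosSemidef)
    (hA' : (-A).PosSemidef) : A = 0 := by
  have hcol : ∀ x, A *ᵥ x = 0 := by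
    intro x
    rw [← hA.dotProduct_mulVec_zero_iff]
    have h1 := hA.dotProduct_mulVec_nonneg x
    have h2 := hA'.dotProduct_mulVec_nonneg x
    rw [Matrix.neg_mulVec, dotProduct_neg] at h2
    exact le_antisymm (neg_nonneg.mp h2) h1
  ext i j
  have h3 := congrFun (hcol (Pi.single j 1)) i
  rw [Matrix.mulVec_single] at h3
  simpa using h3

lemma psd_le_trace_smul_one {B : Matrix (Fin d) (Fin d) ℂ} (hB : B.PosSemidef) :
    (((B.trace.re : ℝ) : ℂ) • 1 - B).PosSemidef := by
  classical
  set γ := hB.1.eigenvalues with hγdef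
  set U := (hB.1.eigenvectorUnitary : Matrix (Fin d) (Fin d) ℂ) with hUdef
  have hspec : B = U * diagonal (RCLike.ofReal ∘ γ) * star U := hB.1.spectral_theorem
  have hU1 : U * star U = 1 := Matrix.mem_unitaryGroup_iff.mp hB.1.eigenvectorUnitary.2
  have hU1' : star U * U = 1 := Matrix.mem_unitaryGroup_iff'.mp hB.1.eigenvectorUnitary.2
  have htr : B.trace = ∑ i, ((γ i : ℝ) : ℂ) := by
    rw [hspec, Matrix.trace_mul_cycle, hU1', one_mul, Matrix.trace_diagonal]
    rfl
  have htre : B.trace.re = ∑ i, γ i := by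
    rw [htr]; simp
  have key : ((B.trace.re : ℂ) • 1 - B) =
      U * diagonal (fun i => ((B.trace.re - γ i : ℝ) : ℂ)) * star U := by
    have h1 : (B.trace.re : ℂ) • (1 : Matrix (Fin d) (Fin d) ℂ) =
        U * ((B.trace.re : ℂ) • 1) * star U := by
      rw [Matrix.mul_smul, Matrix.smul_mul, Matrix.mul_one, hU1]
    rw [h1]
    nth_rewrite 2 [hspec]
    rw [← Matrix.sub_mul, ← Matrix.mul_sub, Matrix.smul_one_eq_diagonal, Matrix.diagonal_sub]
    congr 1
    ext i
    push_cast
    rfl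
  rw [key, Matrix.star_eq_conjTranspose U]
  refine Matrix.PosSemidef.mul_mul_conjTranspose_same ?_ U
  refine Matrix.posSemidef_diagonal_iff.mpr fun i => ?_
  refine Complex.zero_le_real.mpr (sub_nonneg.mpr ?_)
  rw [htre]
  exact Finset.single_le_sum (fun j _ => hB.eigenvalues_nonneg j) (Finset.mem_univ i)



lemma key_diag (γ : Fin d → ℝ) (hγ : ∀ i, 0 ≤ γ i) :
    ∃ μ : ℝ, 0 < μ ∧ ∀ B : Matrix (Fin d) (Fin d) ℂ, B.PosSemidef →
      (∃ C : ℝ, ((C : ℂ) • diagonal (RCLike.ofReal ∘ γ) - B).PosSemidef) →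
      (((μ * B.trace.re : ℝ) : ℂ) • diagonal (RCLike.ofReal ∘ γ) - B).PosSemidef := by
  classical
  set D : Matrix (Fin d) (Fin d) ℂ := diagonal (RCLike.ofReal ∘ γ) with hD
  have hDH : D.IsHermitian := by
    rw [hD]
    apply Matrix.isHermitian_diagonal_of_self_adjoint
    funext i
    simp [Function.comp, Pi.star_apply, Complex.star_def, Complex.conj_ofReal]
  by_cases ht : ∃ i, γ i ≠ 0
  case neg =>
    -- all eigenvalues vanish, D = 0
    push_neg at ht
    have hD0 : D = 0 := by
      rw [hD]
      have : (RCLike.ofReal ∘ γ : Fin d → ℂ) = 0 := by funext i; simp [ht i]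
      rw [this]
      ext i j
      simp [Matrix.diagonal]
    refine ⟨1, one_pos, fun B hB hdom => ?_⟩
    obtain ⟨C, hC⟩ := hdom
    rw [hD0] at hC ⊢
    have hB0 : B = 0 := psd_neg_eq_zero hB (by simpa using hC)
    simpa [hB0] using Matrix.PosSemidef.zero
  case pos =>
    set t : Finset (Fin d) := Finset.univ.filter fun i => γ i ≠ 0 with htdef
    have htne : (t.image γ).Nonempty := by
      obtain ⟨i, hi⟩ := ht
      exact ⟨γ i, Finset.mem_image_of_mem γ (by simp [htdef, hi])⟩
    set Λ : ℝ := (t.image γ).min' htne with hΛdef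
    have hΛmem : Λ ∈ t.image γ := Finset.min'_mem _ _
    have hΛpos : 0 < Λ := by
      obtain ⟨i, hi, hie⟩ := Finset.mem_image.mp hΛmem
      have : γ i ≠ 0 := by simpa [htdef] using (Finset.mem_filter.mp hi).2
      rw [← hie]
      exact lt_of_le_of_ne (hγ i) (Ne.symm this)
    have hΛle : ∀ i, γ i ≠ 0 → Λ ≤ γ i := fun i hi =>
      Finset.min'_le _ _ (Finset.mem_image_of_mem γ (by simp [htdef, hi]))
    refine ⟨Λ⁻¹, inv_pos.mpr hΛpos, fun B hB hdom => ?_⟩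
    obtain ⟨C, hC⟩ := hdom
    set T : ℝ := B.trace.re with hT
    have hT0 : 0 ≤ T := psd_trace_re_nonneg hB
    -- columns (and rows) of B at zero eigenvalues vanish
    have hcol : ∀ i, γ i = 0 → ∀ j, B j i = 0 := by
      intro i hi j
      have hDe : D *ᵥ Pi.single i 1 = 0 := by
        funext k
        rw [hD]
        simp [Matrix.mulVec_diagonal, Pi.single_apply]
        intro hk
        subst hk
        simp [hi]
      have hq0 : star (Pi.single i 1) ⬝ᵥ B *ᵥ (Pi.single i 1) = 0 := by
        have h2 := hC.dotProduct_mulVec_nonneg (Pi.single i 1)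
        rw [Matrix.sub_mulVec, Matrix.smul_mulVec, hDe, smul_zero, zero_sub,
          dotProduct_neg] at h2
        exact le_antisymm (neg_nonneg.mp h2) (hB.dotProduct_mulVec_nonneg _)
      have := (hB.dotProduct_mulVec_zero_iff _).mp hq0
      have h4 := congrFun this j
      rw [Matrix.mulVec_single] at h4
      simpa using h4
    have hrow : ∀ i, γ i = 0 → ∀ j, B i j = 0 := by
      intro i hi j
      have := congrFun (congrFun hB.1.eq i) j
      rw [Matrix.conjTranspose_apply] at this
      rw [← this, hcol i hi j, star_zero]
    -- the truncated vector z
    refine Matrix.PosSemidef.of_dotProduct_mulVec_nonneg ?_ fun x => ?_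
    · unfold Matrix.IsHermitian
      rw [Matrix.conjTranspose_sub, Matrix.conjTranspose_smul, hDH.eq, hB.1.eq]
      congr 1
      simp
    set z : Fin d → ℂ := fun i => if γ i = 0 then 0 else x i with hz
    have hBxz : B *ᵥ x = B *ᵥ z := by
      funext j
      simp only [Matrix.mulVec, dotProduct]
      refine Finset.sum_congr rfl fun i _ => ?_
      by_cases hi : γ i = 0
      · rw [hcol i hi j]; simp
      · rw [hz]; simp [hi]
    have hdotz : star x ⬝ᵥ (B *ᵥ z) = star z ⬝ᵥ (B *ᵥ z) := by
      simp only [dotProduct]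
      refine Finset.sum_congr rfl fun j _ => ?_
      by_cases hj : γ j = 0
      · have hBz : (B *ᵥ z) j = 0 := by
          simp only [Matrix.mulVec, dotProduct]
          exact Finset.sum_eq_zero fun i _ => by rw [hrow j hj i, zero_mul]
        rw [hBz, mul_zero, mul_zero]
      · rw [hz]; simp [hj]
    -- real quantities
    set r : ℝ := ∑ i, Complex.normSq (z i) with hr
    have hzz : star z ⬝ᵥ z = ((r : ℝ) : ℂ) := by
      rw [hr]
      push_cast
      simp only [dotProduct, Pi.star_apply]
      refine Finset.sum_congr rfl fun i _ => ?_
      rw [Complex.star_def, mul_comm, Complex.mul_conj]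
    have hqB : star x ⬝ᵥ B *ᵥ x = star z ⬝ᵥ B *ᵥ z := by rw [hBxz, hdotz]
    -- bound from trace
    have htrb : (star z ⬝ᵥ B *ᵥ z).re ≤ T * r := by
      have h5 := (psd_le_trace_smul_one hB).dotProduct_mulVec_nonneg z
      rw [Matrix.sub_mulVec, dotProduct_sub, Matrix.smul_mulVec,
        Matrix.one_mulVec, dotProduct_smul, hzz] at h5
      have h6 : (0:ℝ) ≤ (((T:ℂ)) * ((r:ℝ):ℂ) - star z ⬝ᵥ B *ᵥ z).re := by
        simpa using (RCLike.nonneg_iff.mp h5).1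
      have : ((T:ℂ) * ((r:ℝ):ℂ)).re = T * r := by
        norm_cast
      rw [Complex.sub_re, this] at h6
      linarith
    -- dD equals a real sum
    have hdD : star x ⬝ᵥ D *ᵥ x = ((∑ i, γ i * Complex.normSq (x i) : ℝ) : ℂ) := by
      push_cast
      simp only [dotProduct, Pi.star_apply]
      refine Finset.sum_congr rfl fun i _ => ?_
      rw [hD, Matrix.mulVec_diagonal]
      have h8 : ((RCLike.ofReal ∘ γ) i : ℂ) = ((γ i : ℝ) : ℂ) := rfl
      rw [h8, Complex.star_def]
      have h9 : (starRingEnd ℂ) (x i) * (((γ i : ℝ) : ℂ) * x i) =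
          ((γ i : ℝ) : ℂ) * (x i * (starRingEnd ℂ) (x i)) := by ring
      rw [h9, Complex.mul_conj]
    have hsum1 : Λ * r ≤ ∑ i, γ i * Complex.normSq (x i) := by
      rw [hr, Finset.mul_sum]
      refine Finset.sum_le_sum fun i _ => ?_
      by_cases hi : γ i = 0
      · rw [hz]; simp [hi]
      · have hzi : z i = x i := by rw [hz]; simp [hi]
        rw [hzi]
        exact mul_le_mul_of_nonneg_right (hΛle i hi) (Complex.normSq_nonneg _)
    have hS0 : 0 ≤ r := Finset.sum_nonneg fun i _ => Complex.normSq_nonneg _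
    rw [Matrix.sub_mulVec, dotProduct_sub, Matrix.smul_mulVec,
      dotProduct_smul, hdD, hqB, eq_re_of_nonneg (hB.dotProduct_mulVec_nonneg z)]
    rw [smul_eq_mul, ← Complex.ofReal_mul, ← Complex.ofReal_sub, Complex.zero_le_real]
    have h10 : Λ⁻¹ * T * (Λ * r) ≤ Λ⁻¹ * T * (∑ i, γ i * Complex.normSq (x i)) :=
      mul_le_mul_of_nonneg_left hsum1 (mul_nonneg (inv_nonneg.mpr hΛpos.le) hT0)
    have h11 : Λ⁻¹ * T * (Λ * r) = T * r := by
      field_simp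
    have h12 := htrb
    have h13 : Λ⁻¹ * B.trace.re * (∑ i, γ i * Complex.normSq (x i)) = Λ⁻¹ * T * (∑ i, γ i * Complex.normSq (x i)) := by rw [← hT]
    rw [mul_assoc] at h10 ⊢
    nlinarith [h10, h11, h12]


lemma conj_sub_smul (U V X Y : Matrix (Fin d) (Fin d) ℂ) (c : ℂ) :
    U * (c • X - Y) * V = c • (U * X * V) - U * Y * V := by
  rw [Matrix.mul_sub, Matrix.sub_mul, Matrix.mul_smul, Matrix.smul_mul]

lemma key {σ : Matrix (Fin d) (Fin d) ℂ} (hσ : σ.PosSemidef) :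
    ∃ μ : ℝ, 0 < μ ∧ ∀ A : Matrix (Fin d) (Fin d) ℂ, A.PosSemidef →
      (∃ C : ℝ, ((C : ℂ) • σ - A).PosSemidef) →
      (((μ * A.trace.re : ℝ) : ℂ) • σ - A).PosSemidef := by
  classical
  obtain ⟨μ, hμ, hkey⟩ := key_diag hσ.1.eigenvalues hσ.eigenvalues_nonneg
  set U := (hσ.1.eigenvectorUnitary : Matrix (Fin d) (Fin d) ℂ) with hU
  set D : Matrix (Fin d) (Fin d) ℂ := diagonal (RCLike.ofReal ∘ hσ.1.eigenvalues) with hD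
  have hU1 : U * star U = 1 := Matrix.mem_unitaryGroup_iff.mp hσ.1.eigenvectorUnitary.2
  have hspec : σ = U * D * star U := hσ.1.spectral_theorem
  have hdiag : star U * σ * U = D := by
    rw [hspec]
    simp only [← Matrix.mul_assoc]
    rw [Matrix.mem_unitaryGroup_iff'.mp hσ.1.eigenvectorUnitary.2, one_mul, Matrix.mul_assoc,
      Matrix.mem_unitaryGroup_iff'.mp hσ.1.eigenvectorUnitary.2, Matrix.mul_one]
  refine ⟨μ, hμ, fun A hA hdom => ?_⟩
  obtain ⟨C, hC⟩ := hdom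
  set B : Matrix (Fin d) (Fin d) ℂ := star U * A * U with hB
  have hBpsd : B.PosSemidef := by
    have := hA.conjTranspose_mul_mul_same U
    rwa [← Matrix.star_eq_conjTranspose] at this
  have htr : B.trace = A.trace := by
    rw [hB, Matrix.trace_mul_cycle, hU1, one_mul]
  have hCB : ((C : ℂ) • D - B).PosSemidef := by
    have h2 := hC.conjTranspose_mul_mul_same U
    rw [← Matrix.star_eq_conjTranspose] at h2
    have h3 : star U * (((C : ℂ) • σ - A)) * U = (C : ℂ) • D - B := by
      rw [conj_sub_smul, hdiag, hB]
    rwa [h3] at h2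
  have hres := hkey B hBpsd ⟨C, hCB⟩
  have h4 := hres.mul_mul_conjTranspose_same U
  rw [← Matrix.star_eq_conjTranspose] at h4
  have h5 : U * ((((μ * B.trace.re : ℝ) : ℂ)) • D - B) * star U =
      (((μ * A.trace.re : ℝ) : ℂ)) • σ - A := by
    rw [conj_sub_smul, ← hspec, htr, hB]
    congr 1
    simp only [← Matrix.mul_assoc]
    rw [hU1, one_mul, Matrix.mul_assoc, hU1, Matrix.mul_one]
  rwa [h5] at h4



lemma complex_nonneg_iff {z : ℂ} : 0 ≤ z ↔ 0 ≤ z.re ∧ z.im = 0 := by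
  rw [Complex.le_def]
  simp [eq_comm]

lemma dotProduct_sum' {ι : Type*} (s : Finset ι) (x : Fin d → ℂ) (f : ι → (Fin d → ℂ)) :
    x ⬝ᵥ (∑ j ∈ s, f j) = ∑ j ∈ s, x ⬝ᵥ f j := by
  simp only [dotProduct, Finset.sum_apply, Finset.mul_sum]
  exact Finset.sum_comm

lemma trace_re_loopStep_le {m : ℕ} (N : Fin m → Matrix (Fin d) (Fin d) ℂ)
    (M₀ M₁ : Matrix (Fin d) (Fin d) ℂ)
    (hN : ∑ i, (N i)ᴴ * N i = 1) (hM : M₀ᴴ * M₀ + M₁ᴴ * M₁ = 1)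
    {X : Matrix (Fin d) (Fin d) ℂ} (hX : X.PosSemidef) :
    (loopStep N M₁ X).trace.re ≤ X.trace.re := by
  rw [trace_loopStep N M₁ hN]
  have h2 := trace_split M₁ M₀ hM X
  have h0 : 0 ≤ (M₀ * X * M₀ᴴ).trace.re :=
    psd_trace_re_nonneg (hX.mul_mul_conjTranspose_same M₀)
  have h3 := congrArg Complex.re h2
  rw [Complex.add_re] at h3
  linarith

lemma trace_re_iterate_le {m : ℕ} (N : Fin m → Matrix (Fin d) (Fin d) ℂ)
    (M₀ M₁ : Matrix (Fin d) (Fin d) ℂ)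
    (hN : ∑ i, (N i)ᴴ * N i = 1) (hM : M₀ᴴ * M₀ + M₁ᴴ * M₁ = 1)
    {X : Matrix (Fin d) (Fin d) ℂ} (hX : X.PosSemidef) (k : ℕ) :
    ((loopStep N M₁)^[k] X).trace.re ≤ X.trace.re := by
  induction k with
  | zero => simp
  | succ k ih =>
      rw [Function.iterate_succ_apply']
      exact le_trans (trace_re_loopStep_le N M₀ M₁ hN hM (iterate_psd N M₁ hX k)) ih

lemma summable_of_tendsto_zero {m : ℕ} (N : Fin m → Matrix (Fin d) (Fin d) ℂ)
    (M₀ M₁ : Matrix (Fin d) (Fin d) ℂ)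
    (hN : ∑ i, (N i)ᴴ * N i = 1) (hM : M₀ᴴ * M₀ + M₁ᴴ * M₁ = 1)
    (ρ : Matrix (Fin d) (Fin d) ℂ) (hρ : ρ.PosSemidef)
    (h0 : Filter.Tendsto (fun k : ℕ => (((loopStep N M₁)^[k] ρ).trace).re)
      Filter.atTop (nhds 0)) :
    Summable (fun k : ℕ => (((loopStep N M₁)^[k] ρ).trace).re) := by
  classical
  set v : ℕ → Matrix (Fin d) (Fin d) ℂ := fun k => (loopStep N M₁)^[k] ρ with hv
  have hvpsd : ∀ k, (v k).PosSemidef := fun k => iterate_psd N M₁ hρ k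
  have hvsucc : ∀ k, v (k + 1) = loopStep N M₁ (v k) := fun k =>
    Function.iterate_succ_apply' (loopStep N M₁) k ρ
  -- the increasing chain of spans of the orbit stabilizes
  set W : ℕ →o Submodule ℂ (Matrix (Fin d) (Fin d) ℂ) :=
    ⟨fun k => Submodule.span ℂ (Set.range fun j : Fin (k + 1) => v j),
      fun k k' hkk' => Submodule.span_mono (by
        rintro x ⟨j, rfl⟩
        exact ⟨⟨j.1, by omega⟩, rfl⟩)⟩ with hW
  obtain ⟨n, hn⟩ := monotone_stabilizes_iff_noetherian.mpr
    (inferInstance : IsNoetherian ℂ (Matrix (Fin d) (Fin d) ℂ)) W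
  have hstab : W n = W (n + 1) := hn (n + 1) (by omega)
  have hWinv : ∀ x ∈ W n, loopStep N M₁ x ∈ W n := by
    intro x hx
    induction hx using Submodule.span_induction with
    | mem x hxmem =>
        obtain ⟨j, rfl⟩ := hxmem
        have h1 : loopStep N M₁ (v j.1) = v (j.1 + 1) := (hvsucc j.1).symm
        rw [h1, hstab]
        exact Submodule.subset_span ⟨⟨j.1 + 1, by omega⟩, rfl⟩
    | zero =>
        have : loopStep N M₁ 0 = 0 := map_zero (loopStepL N M₁)
        rw [this]; exact Submodule.zero_mem _
    | add y z hy hz ihy ihz =>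
        rw [loopStep_add]; exact Submodule.add_mem _ ihy ihz
    | smul c y hy ihy =>
        rw [loopStep_smul]; exact Submodule.smul_mem _ c ihy
  have hvW : ∀ k, v k ∈ W n := by
    intro k
    induction k with
    | zero => exact Submodule.subset_span ⟨⟨0, by omega⟩, rfl⟩
    | succ k ih => rw [hvsucc k]; exact hWinv _ ih
  -- the dominating positive matrix σ
  set σ : Matrix (Fin d) (Fin d) ℂ := ∑ j : Fin (n + 1), v j with hσ
  have hσpsd : σ.PosSemidef := psd_sum _ _ fun j _ => hvpsd j
  -- every iterate is dominated by a multiple of σ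
  have hdom : ∀ k, ∃ C : ℝ, 0 ≤ C ∧ (((C : ℝ) : ℂ) • σ - v k).PosSemidef := by
    intro k
    obtain ⟨c, hc⟩ := (Submodule.mem_span_range_iff_exists_fun ℂ).mp (hvW k)
    refine ⟨∑ j, ‖c j‖, Finset.sum_nonneg fun j _ => norm_nonneg _, Matrix.PosSemidef.of_dotProduct_mulVec_nonneg ?_ fun x => ?_⟩
    · unfold Matrix.IsHermitian
      rw [Matrix.conjTranspose_sub, Matrix.conjTranspose_smul, hσpsd.1.eq, (hvpsd k).1.eq]
      congr 1
      simp
    · set C : ℝ := ∑ j, ‖c j‖ with hC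
      have hq : ∀ j : Fin (n + 1), 0 ≤ star x ⬝ᵥ (v j) *ᵥ x := fun j => (hvpsd j).dotProduct_mulVec_nonneg x
      have hσx : star x ⬝ᵥ σ *ᵥ x = ∑ j : Fin (n + 1), star x ⬝ᵥ (v j) *ᵥ x := by
        rw [hσ, sum_mulVec, dotProduct_sum']
      have hvx : star x ⬝ᵥ (v k) *ᵥ x = ∑ j : Fin (n + 1), c j * (star x ⬝ᵥ (v j) *ᵥ x) := by
        rw [← hc, sum_mulVec]
        · rw [dotProduct_sum']
          refine Finset.sum_congr rfl fun j _ => ?_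
          rw [Matrix.smul_mulVec, dotProduct_smul, smul_eq_mul]
      rw [Matrix.sub_mulVec, dotProduct_sub, Matrix.smul_mulVec,
        dotProduct_smul, smul_eq_mul]
      rw [complex_nonneg_iff]
      constructor
      · rw [Complex.sub_re, Complex.mul_re]
        have him : (star x ⬝ᵥ σ *ᵥ x).im = 0 := by
          simpa using (RCLike.nonneg_iff.mp (hσpsd.dotProduct_mulVec_nonneg x)).2
        rw [him]
        simp only [Complex.ofReal_re, Complex.ofReal_im, mul_zero, zero_mul, sub_zero]
        have hre : (star x ⬝ᵥ (v k) *ᵥ x).re = ∑ j : Fin (n + 1), (c j).re * (star x ⬝ᵥ (v j.1) *ᵥ x).re := by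
          rw [hvx, Complex.re_sum]
          refine Finset.sum_congr rfl fun j _ => ?_
          rw [eq_re_of_nonneg (hq j), Complex.mul_re]
          simp
        rw [hre]
        have hσre : (star x ⬝ᵥ σ *ᵥ x).re = ∑ j : Fin (n + 1), (star x ⬝ᵥ (v j.1) *ᵥ x).re := by
          rw [hσx, Complex.re_sum]
        rw [hσre, Finset.mul_sum, ← Finset.sum_sub_distrib]
        refine Finset.sum_nonneg fun j _ => ?_
        have h1 : 0 ≤ (star x ⬝ᵥ (v j) *ᵥ x).re := (RCLike.nonneg_iff.mp (hq j)).1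
        have h2 : (c j).re ≤ C := by
          refine le_trans (le_abs_self _) (le_trans (Complex.abs_re_le_norm _) ?_)
          exact Finset.single_le_sum (fun i _ => norm_nonneg (c i)) (Finset.mem_univ j)
        nlinarith
      · rw [Complex.sub_im, Complex.mul_im]
        have him : (star x ⬝ᵥ σ *ᵥ x).im = 0 := by
          simpa using (RCLike.nonneg_iff.mp (hσpsd.dotProduct_mulVec_nonneg x)).2
        have hkim : (star x ⬝ᵥ (v k) *ᵥ x).im = 0 := by
          simpa using (RCLike.nonneg_iff.mp ((hvpsd k).dotProduct_mulVec_nonneg x)).2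
        rw [him, hkim]
        simp
  -- iterates of σ are sums of iterates of ρ
  have hEσ : ∀ K, (loopStep N M₁)^[K] σ = ∑ j : Fin (n + 1), v (K + j.1) := by
    intro K
    rw [hσ, iterate_sum]
    refine Finset.sum_congr rfl fun j _ => ?_
    exact (Function.iterate_add_apply (loopStep N M₁) K j.1 ρ).symm
  have hdomE : ∀ K, ∃ C : ℝ, (((C : ℝ) : ℂ) • σ - (loopStep N M₁)^[K] σ).PosSemidef := by
    intro K
    choose C hC0 hCP using hdom
    refine ⟨∑ j : Fin (n + 1), C (K + j.1), ?_⟩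
    rw [hEσ K]
    have hsplit : ((((∑ j : Fin (n + 1), C (K + j.1)) : ℝ) : ℂ)) • σ -
        ∑ j : Fin (n + 1), v (K + j.1) =
        ∑ j : Fin (n + 1), ((((C (K + j.1) : ℝ)) : ℂ) • σ - v (K + j.1)) := by
      rw [Finset.sum_sub_distrib, ← Finset.sum_smul]
      congr 2
      push_cast
      ring
    rw [hsplit]
    exact psd_sum _ _ fun j _ => hCP (K + j.1)
  -- the trace sequence of iterates of σ
  set s : ℕ → ℝ := fun j => (((loopStep N M₁)^[j] σ).trace).re with hs
  have hs0 : ∀ j, 0 ≤ s j := fun j => psd_trace_re_nonneg (iterate_psd N M₁ hσpsd j)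
  have hsle0 : ∀ j, s j ≤ s 0 := by
    intro j
    have := trace_re_iterate_le N M₀ M₁ hN hM hσpsd j
    simpa [hs] using this
  obtain ⟨μ, hμ, hkey⟩ := key hσpsd
  -- σ-trace tends to zero
  have htend : Filter.Tendsto s Filter.atTop (nhds 0) := by
    have h1 : ∀ j : Fin (n + 1), Filter.Tendsto (fun K => ((v (K + j.1)).trace).re)
        Filter.atTop (nhds 0) := by
      intro j
      exact h0.comp (Filter.tendsto_add_atTop_nat j.1)
    have h2 : Filter.Tendsto (fun K => ∑ j : Fin (n + 1), ((v (K + j.1)).trace).re)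
        Filter.atTop (nhds 0) := by
      have := tendsto_finset_sum Finset.univ fun j (_ : j ∈ Finset.univ) => h1 j
      simpa using this
    refine h2.congr fun K => ?_
    rw [hs]
    simp only
    rw [hEσ K, Matrix.trace_sum, Complex.re_sum]
  -- choose the contraction exponent K
  have hhalfpos : (0 : ℝ) < 1 / (2 * μ) := by positivity
  have hev : ∀ᶠ K in Filter.atTop, s K < 1 / (2 * μ) := htend.eventually_lt_const hhalfpos
  obtain ⟨K, hK1, hKlt⟩ := (hev.and (Filter.eventually_ge_atTop 1)).exists
  haveI : NeZero K := ⟨by omega⟩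
  have hμs : μ * s K ≤ 1 / 2 := by
    rw [lt_div_iff₀ (by positivity)] at hK1
    nlinarith
  -- the half-contraction
  have hhalf : ((((1 : ℝ) / 2 : ℝ) : ℂ) • σ - (loopStep N M₁)^[K] σ).PosSemidef := by
    have h1 := hkey _ (iterate_psd N M₁ hσpsd K) (hdomE K)
    have h2 : (0 : ℝ) ≤ 1 / 2 - μ * s K := by linarith
    have h3 := (psd_smul hσpsd h2).add h1
    have h4 : ((((1 / 2 - μ * s K : ℝ)) : ℂ) • σ) +
        ((((μ * ((loopStep N M₁)^[K] σ).trace.re : ℝ)) : ℂ) • σ - (loopStep N M₁)^[K] σ) =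
        (((1 : ℝ) / 2 : ℝ) : ℂ) • σ - (loopStep N M₁)^[K] σ := by
      have hsK : ((loopStep N M₁)^[K] σ).trace.re = s K := rfl
      rw [hsK]
      push_cast
      module
    rwa [h4] at h3
  -- geometric decay along multiples of K
  have hgeo : ∀ q r, ((((2⁻¹ : ℝ) ^ q : ℝ) : ℂ) • (loopStep N M₁)^[r] σ -
      (loopStep N M₁)^[q * K + r] σ).PosSemidef := by
    intro q
    induction q with
    | zero =>
        intro r
        simp only [pow_zero, Nat.zero_mul, Nat.zero_add, Complex.ofReal_one, one_smul, sub_self]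
        exact Matrix.PosSemidef.zero
    | succ q ih =>
        intro r
        have hmono := iterate_mono N M₁ hhalf (q * K + r)
        rw [iterate_smul_real] at hmono
        have hidx : (loopStep N M₁)^[q * K + r] ((loopStep N M₁)^[K] σ) =
            (loopStep N M₁)^[(q + 1) * K + r] σ := by
          rw [← Function.iterate_add_apply]
          congr 1
          ring
        rw [hidx] at hmono
        have ihs := psd_smul (ih r) (by norm_num : (0:ℝ) ≤ 1/2)
        have h5 : ((((1:ℝ)/2 : ℝ)) : ℂ) • ((((2⁻¹ : ℝ) ^ q : ℝ) : ℂ) • (loopStep N M₁)^[r] σ -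
            (loopStep N M₁)^[q * K + r] σ) =
            (((2⁻¹ : ℝ) ^ (q + 1) : ℝ) : ℂ) • (loopStep N M₁)^[r] σ -
            ((((1:ℝ)/2 : ℝ)) : ℂ) • (loopStep N M₁)^[q * K + r] σ := by
          rw [smul_sub, smul_smul]
          congr 2
          push_cast
          ring
        rw [h5] at ihs
        exact loe_trans hmono ihs
  -- trace bound with geometric decay
  have hsgeo : ∀ j, s j ≤ (2⁻¹ : ℝ) ^ (j / K) * s 0 := by
    intro j
    have hj : j / K * K + j % K = j := by rw [Nat.mul_comm]; exact Nat.div_add_mod j K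
    have h6 := trace_re_mono (hgeo (j / K) (j % K))
    rw [hj] at h6
    have h7 : (((((2⁻¹ : ℝ) ^ (j / K) : ℝ)) : ℂ) • (loopStep N M₁)^[j % K] σ).trace.re =
        (2⁻¹ : ℝ) ^ (j / K) * s (j % K) := by
      rw [Matrix.trace_smul, smul_eq_mul, Complex.re_ofReal_mul]
    rw [h7] at h6
    have h8 : (2⁻¹ : ℝ) ^ (j / K) * s (j % K) ≤ (2⁻¹ : ℝ) ^ (j / K) * s 0 :=
      mul_le_mul_of_nonneg_left (hsle0 _) (by positivity)
    exact le_trans h6 h8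
  -- summability of the geometric bound
  have hgeosum : Summable (fun j : ℕ => (2⁻¹ : ℝ) ^ (j / K) * s 0) := by
    have hbase : Summable (fun j : ℕ => (2⁻¹ : ℝ) ^ (j / K)) := by
      have heq : (fun j : ℕ => (2⁻¹ : ℝ) ^ (j / K)) =
          (fun p : ℕ × Fin K => (2⁻¹ : ℝ) ^ p.1) ∘ (Nat.divModEquiv K) := rfl
      rw [heq, (Nat.divModEquiv K).summable_iff]
      rw [summable_prod_of_nonneg (fun p => by positivity)]
      constructor
      · intro q
        exact Summable.of_finite
      · have hconst : ∀ q : ℕ, (∑' _ : Fin K, (2⁻¹ : ℝ) ^ q) = (K : ℝ) * (2⁻¹ : ℝ) ^ q := by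
          intro q
          rw [tsum_const]
          simp [nsmul_eq_mul]
        simp_rw [hconst]
        exact (summable_geometric_of_lt_one (by norm_num) (by norm_num)).mul_left _
    exact hbase.mul_right _
  have hssum : Summable s := Summable.of_nonneg_of_le hs0 hsgeo hgeosum
  -- compare ρ with σ
  have hρσ : (σ - v 0).PosSemidef := by
    have h9 : σ - v 0 = ∑ j ∈ Finset.univ.erase (0 : Fin (n + 1)), v j := by
      rw [hσ, ← Finset.add_sum_erase Finset.univ _ (Finset.mem_univ (0 : Fin (n + 1)))]
      simp
    rw [h9]
    exact psd_sum _ _ fun j _ => hvpsd j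
  have hcomp : ∀ k, ((v k).trace).re ≤ s k := by
    intro k
    have := iterate_mono N M₁ hρσ k
    have h10 : (loopStep N M₁)^[k] (v 0) = v k := rfl
    rw [h10] at this
    exact trace_re_mono this
  exact Summable.of_nonneg_of_le (fun k => psd_trace_re_nonneg (hvpsd k)) hcomp hssum

end AstAux

/-- A quantum while-loop with trace-preserving body terminates almost surely on a
positive input `ρ` iff its expected runtime `Σ_k tr(ℰ^k ρ)` is finite. -/
theorem ast_iff_finite_expected_runtime
    (d m : ℕ) (hd : 1 ≤ d) (hm : 1 ≤ m)
    (N : Fin m → Matrix (Fin d) (Fin d) ℂ)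
    (hN : ∑ i, (N i)ᴴ * N i = 1)
    (M₀ M₁ : Matrix (Fin d) (Fin d) ℂ)
    (hM : M₀ᴴ * M₀ + M₁ᴴ * M₁ = 1)
    (ρ : Matrix (Fin d) (Fin d) ℂ) (hρ : ρ.PosSemidef) :
    Summable (fun k : ℕ => (((loopStep N M₁)^[k] ρ).trace).re) ↔
      ∑' k : ℕ, ((M₀ * ((loopStep N M₁)^[k] ρ) * M₀ᴴ).trace).re = ρ.trace.re := by
  classical
  set a : ℕ → ℝ := fun k => (((loopStep N M₁)^[k] ρ).trace).re with ha
  set b : ℕ → ℝ := fun k => ((M₀ * ((loopStep N M₁)^[k] ρ) * M₀ᴴ).trace).re with hb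
  have hvpsd : ∀ k, ((loopStep N M₁)^[k] ρ).PosSemidef := fun k => AstAux.iterate_psd N M₁ hρ k
  have ha0 : ∀ k, 0 ≤ a k := fun k => AstAux.psd_trace_re_nonneg (hvpsd k)
  have hb0 : ∀ k, 0 ≤ b k := fun k =>
    AstAux.psd_trace_re_nonneg ((hvpsd k).mul_mul_conjTranspose_same M₀)
  have hstep : ∀ k, a (k + 1) = a k - b k := by
    intro k
    have h1 : ((loopStep N M₁)^[k + 1] ρ).trace =
        (M₁ * ((loopStep N M₁)^[k] ρ) * M₁ᴴ).trace := by
      rw [Function.iterate_succ_apply']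
      exact AstAux.trace_loopStep N M₁ hN _
    have h2 := AstAux.trace_split M₁ M₀ hM ((loopStep N M₁)^[k] ρ)
    have h3 := congrArg Complex.re h2
    rw [Complex.add_re] at h3
    have h4 := congrArg Complex.re h1
    simp only [ha, hb]
    rw [h4]
    linarith
  have ha_anti : ∀ k, a (k + 1) ≤ a k := fun k => by rw [hstep k]; linarith [hb0 k]
  have hpartial : ∀ n, ∑ k ∈ Finset.range n, b k = a 0 - a n := by
    intro n
    induction n with
    | zero => simp
    | succ n ih => rw [Finset.sum_range_succ, ih, hstep n]; ring
  have hmono : Antitone a := antitone_nat_of_succ_le ha_anti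
  have hbdd : BddBelow (Set.range a) := ⟨0, by rintro y ⟨k, rfl⟩; exact ha0 k⟩
  have hconv : Filter.Tendsto a Filter.atTop (nhds (⨅ k, a k)) :=
    tendsto_atTop_ciInf hmono hbdd
  set L : ℝ := ⨅ k, a k with hL
  have hbsum : Summable b := summable_of_sum_range_le (c := a 0) hb0 fun n => by
    rw [hpartial n]
    linarith [ha0 n]
  have htsum : ∑' k, b k = a 0 - L := by
    have h2 : Filter.Tendsto (fun n => ∑ k ∈ Finset.range n, b k) Filter.atTop
        (nhds (a 0 - L)) := by
      have := Filter.Tendsto.sub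
        (tendsto_const_nhds : Filter.Tendsto (fun _ : ℕ => a 0) Filter.atTop (nhds (a 0))) hconv
      refine this.congr fun n => ?_
      rw [hpartial n]
    exact tendsto_nhds_unique hbsum.hasSum.tendsto_sum_nat h2
  have ha0eq : a 0 = ρ.trace.re := rfl
  constructor
  · intro hsum
    have hz : Filter.Tendsto a Filter.atTop (nhds 0) := hsum.tendsto_atTop_zero
    have hL0 : L = 0 := tendsto_nhds_unique hconv hz
    rw [htsum, hL0, sub_zero, ha0eq]
  · intro htot
    have hL0 : L = 0 := by
      rw [htot] at htsum
      rw [← ha0eq] at htsum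
      linarith
    have hz : Filter.Tendsto a Filter.atTop (nhds 0) := hL0 ▸ hconv
    exact AstAux.summable_of_tendsto_zero N M₀ M₁ hN hM ρ hρ hz
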